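/- Let ρ : (0,1] → ℝ be a nonnegative measurable function such that r ↦ r⁴ρ(r) is integrable on (0,1) and satisfies the second-moment normalization ∫₀¹ r⁴ρ(r) dr = 3/(2π). Then for every δ > 0 and every k ∈ ℤ³ \ {0}, the 3D nonlocal Fourier symbol satisfies the upper bound λ_δ(k) ≤ |k|². -/

import Mathlib

open Real MeasureTheory

/-- Euclidean norm of a nonzero integer vector `k ∈ ℤ³`. -/
noncomputable def knorm3 (k : ℤ × ℤ × ℤ) : ℝ :=
  Real.sqrt ((k.1 : ℝ) ^ 2 + (k.2.1 : ℝ) ^ 2 + (k.2.2 : ℝ) ^ 2)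

/-- The 3D Fourier symbol of the nonlocal diffusion operator:
`λ_δ(k) = (4π/δ²) ∫₀^{π/2} sin θ ∫₀¹ r² ρ(r) (1 − cos(r δ |k| cos θ)) dr dθ`. -/
noncomputable def lambdaDelta3 (ρ : ℝ → ℝ) (δ κ : ℝ) : ℝ :=
  (4 * π / δ ^ 2) * ∫ θ in (0:ℝ)..(π / 2), Real.sin θ *
    ∫ r in (0:ℝ)..1, r ^ 2 * ρ r * (1 - Real.cos (r * δ * κ * Real.cos θ))

lemma integral_sin_mul_cos_sq_pi_div_two :
    (∫ θ in (0:ℝ)..(π / 2), Real.sin θ * Real.cos θ ^ 2) = 1 / 3 := by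
  have h : ∀ θ ∈ Set.uIcc (0:ℝ) (π/2),
      HasDerivAt (fun x : ℝ => -(Real.cos x ^ 3) / 3) (Real.sin θ * Real.cos θ ^ 2) θ := by
    intro θ _
    have : HasDerivAt (fun x : ℝ => -(Real.cos x ^ 3) / 3)
        (-(((3:ℕ):ℝ) * Real.cos θ ^ (3 - 1) * -Real.sin θ) / 3) θ :=
      ((Real.hasDerivAt_cos θ).pow 3).neg.div_const 3
    convert this using 1
    ring
  rw [intervalIntegral.integral_eq_sub_of_hasDerivAt h]
  · simp [Real.cos_pi_div_two]; norm_num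
  · apply Continuous.intervalIntegrable
    continuity

set_option maxHeartbeats 1000000 in
theorem lambdaDelta3_upper_bound (ρ : ℝ → ℝ) (hmeas : Measurable ρ)
    (hnonneg : ∀ r ∈ Set.Ioc (0:ℝ) 1, 0 ≤ ρ r)
    (hint : IntervalIntegrable (fun r => r ^ 4 * ρ r) volume 0 1)
    (hmoment : (∫ r in (0:ℝ)..1, r ^ 4 * ρ r) = 3 / (2 * π))
    (δ : ℝ) (hδ : 0 < δ) (k : ℤ × ℤ × ℤ) (hk : k ≠ 0) :
    lambdaDelta3 ρ δ (knorm3 k) ≤ (knorm3 k) ^ 2 := by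
  set κ := knorm3 k with hκdef
  have hκ0 : 0 ≤ κ := Real.sqrt_nonneg _
  have hπ : (0:ℝ) < π := Real.pi_pos
  set F : ℝ → ℝ → ℝ := fun θ r => r ^ 2 * ρ r * (1 - Real.cos (r * δ * κ * Real.cos θ)) with hF
  -- pointwise bounds on Icc 0 1
  have hbound : ∀ θ : ℝ, ∀ r ∈ Set.Icc (0:ℝ) 1,
      F θ r ≤ (δ * κ * Real.cos θ) ^ 2 / 2 * (r ^ 4 * ρ r) := by
    intro θ r hr
    rcases eq_or_lt_of_le hr.1 with h0 | h0
    · simp [hF, ← h0]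
    · have hρ := hnonneg r ⟨h0, hr.2⟩
      have h1 : 1 - Real.cos (r * δ * κ * Real.cos θ) ≤ (r * δ * κ * Real.cos θ) ^ 2 / 2 := by
        have := Real.one_sub_sq_div_two_le_cos (x := r * δ * κ * Real.cos θ)
        linarith
      have hr2 : 0 ≤ r ^ 2 * ρ r := mul_nonneg (by positivity) hρ
      calc F θ r ≤ r ^ 2 * ρ r * ((r * δ * κ * Real.cos θ) ^ 2 / 2) :=
            mul_le_mul_of_nonneg_left h1 hr2
        _ = (δ * κ * Real.cos θ) ^ 2 / 2 * (r ^ 4 * ρ r) := by ring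
  have hFnn : ∀ θ : ℝ, ∀ r ∈ Set.Icc (0:ℝ) 1, 0 ≤ F θ r := by
    intro θ r hr
    rcases eq_or_lt_of_le hr.1 with h0 | h0
    · simp [hF, ← h0]
    · have hρ := hnonneg r ⟨h0, hr.2⟩
      have : Real.cos (r * δ * κ * Real.cos θ) ≤ 1 := Real.cos_le_one _
      have hr2 : 0 ≤ r ^ 2 * ρ r := mul_nonneg (by positivity) hρ
      exact mul_nonneg hr2 (by linarith)
  have hFmeas : ∀ θ : ℝ, Measurable (F θ) := by
    intro θ
    exact ((measurable_id.pow_const 2).mul hmeas).mul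
      (measurable_const.sub ((((measurable_id.mul_const δ).mul_const κ).mul_const
        (Real.cos θ)).cos))
  -- integrability of F θ on [0,1]
  have hFint : ∀ θ : ℝ, IntervalIntegrable (F θ) volume 0 1 := by
    intro θ
    rw [intervalIntegrable_iff_integrableOn_Ioc_of_le zero_le_one]
    have hg : IntegrableOn (fun r => (δ * κ * Real.cos θ) ^ 2 / 2 * (r ^ 4 * ρ r))
        (Set.Ioc (0:ℝ) 1) volume := by
      have := (hint.const_mul ((δ * κ * Real.cos θ) ^ 2 / 2))
      rwa [intervalIntegrable_iff_integrableOn_Ioc_of_le zero_le_one] at this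
    refine hg.mono' ((hFmeas θ).aestronglyMeasurable) ?_
    filter_upwards [ae_restrict_mem measurableSet_Ioc] with r hr
    rw [Real.norm_eq_abs, abs_of_nonneg (hFnn θ r ⟨hr.1.le, hr.2⟩)]
    exact hbound θ r ⟨hr.1.le, hr.2⟩
  -- the inner integral I θ
  set I : ℝ → ℝ := fun θ => ∫ r in (0:ℝ)..1, F θ r with hI
  have hInn : ∀ θ, 0 ≤ I θ := fun θ =>
    intervalIntegral.integral_nonneg zero_le_one (fun r hr => hFnn θ r hr)
  have hIle : ∀ θ, I θ ≤ (δ * κ * Real.cos θ) ^ 2 / 2 * (3 / (2 * π)) := by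
    intro θ
    have h1 : I θ ≤ ∫ r in (0:ℝ)..1, (δ * κ * Real.cos θ) ^ 2 / 2 * (r ^ 4 * ρ r) :=
      intervalIntegral.integral_mono_on zero_le_one (hFint θ)
        (hint.const_mul _) (hbound θ)
    calc I θ ≤ _ := h1
      _ = (δ * κ * Real.cos θ) ^ 2 / 2 * (3 / (2 * π)) := by
          rw [intervalIntegral.integral_const_mul, hmoment]
  -- measurability of I
  have hImeas : Measurable I := by
    have hFm2 : StronglyMeasurable (Function.uncurry F) := by
      apply Measurable.stronglyMeasurable
      exact ((measurable_snd.pow_const 2).mul (hmeas.comp measurable_snd)).mul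
        (measurable_const.sub ((((measurable_snd.mul_const δ).mul_const κ).mul
          (measurable_fst.cos)).cos))
    have := hFm2.integral_prod_right'  (ν := volume.restrict (Set.Ioc (0:ℝ) 1))
    have heq : I = fun θ => ∫ r in Set.Ioc (0:ℝ) 1, F θ r := by
      funext θ
      rw [hI]
      exact intervalIntegral.integral_of_le zero_le_one
    rw [heq]
    exact this.measurable
  -- outer integral bound
  set M : ℝ := 3 / (2 * π) with hM
  have hMpos : 0 < M := by positivity
  have gcont : Continuous fun θ : ℝ => Real.sin θ * ((δ * κ * Real.cos θ) ^ 2 / 2 * M) := by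
    continuity
  have houter : (∫ θ in (0:ℝ)..(π/2), Real.sin θ * I θ)
      ≤ ∫ θ in (0:ℝ)..(π/2), Real.sin θ * ((δ * κ * Real.cos θ) ^ 2 / 2 * M) := by
    have hbnd : ∀ θ ∈ Set.Icc (0:ℝ) (π/2),
        Real.sin θ * I θ ≤ Real.sin θ * ((δ * κ * Real.cos θ) ^ 2 / 2 * M) := by
      intro θ hθ
      have hs : 0 ≤ Real.sin θ := Real.sin_nonneg_of_nonneg_of_le_pi hθ.1 (by linarith [hθ.2])
      exact mul_le_mul_of_nonneg_left (hIle θ) hs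
    have hgint : IntervalIntegrable
        (fun θ => Real.sin θ * ((δ * κ * Real.cos θ) ^ 2 / 2 * M)) volume 0 (π/2) :=
      gcont.intervalIntegrable _ _
    have hpos2 : (0:ℝ) ≤ π / 2 := by positivity
    have hfint : IntervalIntegrable (fun θ => Real.sin θ * I θ) volume 0 (π/2) := by
      rw [intervalIntegrable_iff_integrableOn_Ioc_of_le hpos2]
      have hg' : IntegrableOn (fun θ => Real.sin θ * ((δ * κ * Real.cos θ) ^ 2 / 2 * M))
          (Set.Ioc (0:ℝ) (π/2)) volume := by
        rw [← intervalIntegrable_iff_integrableOn_Ioc_of_le hpos2]; exact hgint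
      refine hg'.mono' ((Real.measurable_sin.mul hImeas).aestronglyMeasurable) ?_
      filter_upwards [ae_restrict_mem measurableSet_Ioc] with θ hθ
      have hs : 0 ≤ Real.sin θ :=
        Real.sin_nonneg_of_nonneg_of_le_pi hθ.1.le (by linarith [hθ.2])
      rw [Real.norm_eq_abs, abs_of_nonneg (mul_nonneg hs (hInn θ))]
      exact hbnd θ ⟨hθ.1.le, hθ.2⟩
    exact intervalIntegral.integral_mono_on hpos2 hfint hgint hbnd
  -- compute RHS integral
  have hcalc : (∫ θ in (0:ℝ)..(π/2), Real.sin θ * ((δ * κ * Real.cos θ) ^ 2 / 2 * M))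
      = (δ * κ) ^ 2 / 2 * M * (1/3) := by
    have : (fun θ => Real.sin θ * ((δ * κ * Real.cos θ) ^ 2 / 2 * M))
        = fun θ => (δ * κ) ^ 2 / 2 * M * (Real.sin θ * Real.cos θ ^ 2) := by
      funext θ; ring
    rw [this, intervalIntegral.integral_const_mul, integral_sin_mul_cos_sq_pi_div_two]
  -- conclude
  have hC : 0 < 4 * π / δ ^ 2 := by positivity
  have : lambdaDelta3 ρ δ κ ≤ (4 * π / δ ^ 2) * ((δ * κ) ^ 2 / 2 * M * (1/3)) := by
    unfold lambdaDelta3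
    rw [← hcalc]
    exact mul_le_mul_of_nonneg_left houter hC.le
  refine this.trans_eq ?_
  rw [hM]
  field_simp
  ring
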